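/- Let (X, μ) be a probability space, let p ≥ 1, q > 1, R > 0 and M_h > 0 be real, and let h : X → [0, M_h] be measurable with ∫_X h^{1/q} dμ > 0. Then there exists a constant C > 0, depending only on p, q, R, M_h and ∫_X h^{1/q} dμ, such that for all measurable functions u, ũ : X → ℝ with |u| ≤ R and |ũ| ≤ R almost everywhere, one has ( ∫_X | h e^{u}/∫_X h e^{u} dμ − h e^{ũ}/∫_X h e^{ũ} dμ |^p dμ )^{1/p} ≤ C ( ∫_X |u − ũ|^p dμ )^{1/p}. -/

import Mathlib

open MeasureTheory Real

private lemma exp_lip' {R a b : ℝ} (hab : b ≤ a) (ha : |a| ≤ R) :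
    Real.exp a - Real.exp b ≤ Real.exp R * |a - b| := by
  have h1 : Real.exp a - Real.exp b = Real.exp b * (Real.exp (a - b) - 1) := by
    rw [mul_sub, ← Real.exp_add]; ring_nf
  have hmul : Real.exp (a - b) * Real.exp (-(a - b)) = 1 := by
    rw [← Real.exp_add]; simp
  have h2 : Real.exp (a - b) - 1 ≤ (a - b) * Real.exp (a - b) := by
    nlinarith [Real.add_one_le_exp (-(a - b)), Real.exp_pos (a - b)]
  have h3 : Real.exp a ≤ Real.exp R := Real.exp_le_exp.2 (le_trans (le_abs_self a) ha)
  have h4 : Real.exp b * Real.exp (a - b) = Real.exp a := by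
    rw [← Real.exp_add]; ring_nf
  have h5 : |a - b| = a - b := abs_of_nonneg (by linarith)
  rw [h1, h5]
  calc Real.exp b * (Real.exp (a - b) - 1) ≤ Real.exp b * ((a - b) * Real.exp (a - b)) :=
        mul_le_mul_of_nonneg_left h2 (Real.exp_pos b).le
    _ = Real.exp a * (a - b) := by rw [← h4]; ring
    _ ≤ Real.exp R * (a - b) := mul_le_mul_of_nonneg_right h3 (by linarith)

private lemma exp_lip {R a b : ℝ} (ha : |a| ≤ R) (hb : |b| ≤ R) :
    |Real.exp a - Real.exp b| ≤ Real.exp R * |a - b| := by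
  rcases le_total b a with hab | hab
  · rw [abs_of_nonneg (by simpa using Real.exp_le_exp.2 hab)]
    exact exp_lip' hab ha
  · rw [abs_of_nonpos (by simpa using Real.exp_le_exp.2 hab), abs_sub_comm, neg_sub]
    exact exp_lip' hab hb

private lemma two_rpow_bound {a b p : ℝ} (ha : 0 ≤ a) (hb : 0 ≤ b) (hp : 1 ≤ p) :
    (a + b) ^ p ≤ 2 ^ p * (a ^ p + b ^ p) := by
  have hp0 : (0:ℝ) ≤ p := by linarith
  have hmax : 0 ≤ max a b := le_trans ha (le_max_left a b)
  calc (a + b) ^ p ≤ (2 * max a b) ^ p := by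
        apply Real.rpow_le_rpow (by linarith) _ hp0
        nlinarith [le_max_left a b, le_max_right a b]
    _ = 2 ^ p * (max a b) ^ p := Real.mul_rpow (by norm_num) hmax
    _ ≤ 2 ^ p * (a ^ p + b ^ p) := by
        have h2 : (0:ℝ) ≤ 2 ^ p := Real.rpow_nonneg (by norm_num) p
        rcases max_cases a b with ⟨h, _⟩ | ⟨h, _⟩ <;> rw [h] <;>
          nlinarith [Real.rpow_nonneg ha p, Real.rpow_nonneg hb p]

private lemma jensen_rpow {X : Type*} [MeasurableSpace X] {μ : Measure X}
    [IsProbabilityMeasure μ] {p : ℝ} (hp : 1 ≤ p) {g : X → ℝ}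
    (hg : AEStronglyMeasurable g μ) {B : ℝ} (hB : ∀ᵐ x ∂μ, |g x| ≤ B) :
    (∫ x, |g x| ∂μ) ^ p ≤ ∫ x, |g x| ^ p ∂μ := by
  rcases eq_or_lt_of_le hp with h1 | h1
  · rw [← h1]
    simp [Real.rpow_one]
  · have hpq : p.HolderConjugate (p / (p - 1)) := Real.HolderConjugate.conjExponent h1
    have hmem : MemLp (fun x => |g x|) (ENNReal.ofReal p) μ :=
      MemLp.of_bound (by simpa [Real.norm_eq_abs] using hg.norm) B (by filter_upwards [hB] with x hx; simpa using hx)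
    have hmem1 : MemLp (fun _ : X => (1:ℝ)) (ENNReal.ofReal (p / (p - 1))) μ := memLp_const 1
    have key := integral_mul_le_Lp_mul_Lq_of_nonneg hpq
      (Filter.Eventually.of_forall fun x => abs_nonneg (g x))
      (Filter.Eventually.of_forall fun _ => zero_le_one) hmem hmem1
    simp only [mul_one, Real.one_rpow] at key
    rw [integral_const] at key
    simp only [measure_univ, probReal_univ, ENNReal.toReal_one, smul_eq_mul, one_mul, Real.one_rpow, mul_one]
      at key
    have hA : 0 ≤ ∫ x, |g x| ^ p ∂μ :=
      integral_nonneg fun x => Real.rpow_nonneg (abs_nonneg _) p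
    have hJ0 : 0 ≤ ∫ x, |g x| ∂μ := integral_nonneg fun x => abs_nonneg _
    calc (∫ x, |g x| ∂μ) ^ p ≤ ((∫ x, |g x| ^ p ∂μ) ^ (1 / p)) ^ p :=
          Real.rpow_le_rpow hJ0 key (by linarith)
      _ = ∫ x, |g x| ^ p ∂μ := by
          rw [← Real.rpow_mul hA, one_div_mul_cancel (by linarith : p ≠ 0), Real.rpow_one]

private lemma integrable_of_bdd {X : Type*} [MeasurableSpace X] {μ : Measure X}
    [IsFiniteMeasure μ] {f : X → ℝ} (hf : AEStronglyMeasurable f μ) {C : ℝ}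
    (hC : ∀ᵐ x ∂μ, |f x| ≤ C) : Integrable f μ :=
  (integrable_const C).mono' hf (by filter_upwards [hC] with x hx; simpa using hx)

/-- L^p-Lipschitz continuity of the normalized nonlinearity `v ↦ h e^v / ∫ h e^v` on
uniformly bounded functions, on a probability space. -/
theorem stmt_5 {X : Type*} [MeasurableSpace X] (μ : Measure X) [IsProbabilityMeasure μ]
    (p q R Mh : ℝ) (hp : 1 ≤ p) (hq : 1 < q) (hR : 0 < R) (hMh : 0 < Mh)
    (h : X → ℝ) (hhm : Measurable h) (hh0 : ∀ x, 0 ≤ h x) (hhM : ∀ x, h x ≤ Mh)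
    (hhpos : 0 < ∫ x, h x ^ (1 / q) ∂μ) :
    ∃ C : ℝ, 0 < C ∧
      ∀ u v : X → ℝ, Measurable u → Measurable v →
        (∀ᵐ x ∂μ, |u x| ≤ R) → (∀ᵐ x ∂μ, |v x| ≤ R) →
        (∫ x, |h x * Real.exp (u x) / (∫ y, h y * Real.exp (u y) ∂μ) -
            h x * Real.exp (v x) / (∫ y, h y * Real.exp (v y) ∂μ)| ^ p ∂μ) ^ (1 / p) ≤
          C * (∫ x, |u x - v x| ^ p ∂μ) ^ (1 / p) := by
  have hp0 : (0:ℝ) < p := by linarith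
  set E := Real.exp R with hEdef
  have hE0 : (0:ℝ) < E := Real.exp_pos R
  have hhint : Integrable h μ :=
    integrable_of_bdd hhm.aestronglyMeasurable (C := Mh)
      (Filter.Eventually.of_forall fun x => by
        rw [abs_of_nonneg (hh0 x)]; exact hhM x)
  have hm0 : 0 < ∫ x, h x ∂μ := by
    rcases lt_or_eq_of_le (integral_nonneg (f := h) hh0) with hlt | heq
    · exact hlt
    · exfalso
      have h0 : h =ᵐ[μ] 0 := (integral_eq_zero_iff_of_nonneg hh0 hhint).1 heq.symm
      have hz : (∫ x, h x ^ (1 / q) ∂μ) = 0 := by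
        rw [integral_congr_ae (g := fun _ => (0:ℝ)) ?_, integral_zero]
        filter_upwards [h0] with x hx
        have hx0 : h x = 0 := hx
        rw [hx0, Real.zero_rpow]
        positivity
      linarith
  set m0 := ∫ x, h x ∂μ with hm0def
  set m := Real.exp (-R) * m0 with hmdef
  have hm_pos : 0 < m := mul_pos (Real.exp_pos _) hm0
  set K1 := Mh * E / m with hK1def
  set K2 := Mh * E * (Mh * E) / (m * m) with hK2def
  have hK1 : 0 < K1 := div_pos (mul_pos hMh hE0) hm_pos
  have hK2 : 0 < K2 := div_pos (mul_pos (mul_pos hMh hE0) (mul_pos hMh hE0))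
    (mul_pos hm_pos hm_pos)
  set C0 := 2 ^ p * (K1 ^ p + K2 ^ p) with hC0def
  have h2p : (0:ℝ) < 2 ^ p := Real.rpow_pos_of_pos (by norm_num) p
  have hC0 : 0 < C0 := mul_pos h2p
    (add_pos (Real.rpow_pos_of_pos hK1 p) (Real.rpow_pos_of_pos hK2 p))
  refine ⟨C0 ^ (1 / p), Real.rpow_pos_of_pos hC0 _, ?_⟩
  intro u v hum hvm hu hv
  have fact : ∀ w : X → ℝ, Measurable w → (∀ᵐ x ∂μ, |w x| ≤ R) →
      Integrable (fun x => h x * Real.exp (w x)) μ ∧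
      m ≤ (∫ y, h y * Real.exp (w y) ∂μ) ∧ (∫ y, h y * Real.exp (w y) ∂μ) ≤ Mh * E := by
    intro w hwm hw
    have hint : Integrable (fun x => h x * Real.exp (w x)) μ :=
      integrable_of_bdd (hhm.mul (Real.measurable_exp.comp hwm)).aestronglyMeasurable
        (C := Mh * E) (by
          filter_upwards [hw] with x hx
          rw [abs_of_nonneg (mul_nonneg (hh0 x) (Real.exp_pos _).le)]
          exact mul_le_mul (hhM x) (Real.exp_le_exp.2 (le_of_abs_le hx))
            (Real.exp_pos _).le hMh.le)
    refine ⟨hint, ?_, ?_⟩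
    · have hle : ∫ x, Real.exp (-R) * h x ∂μ ≤ ∫ x, h x * Real.exp (w x) ∂μ := by
        apply integral_mono_ae (hhint.const_mul _) hint
        filter_upwards [hw] with x hx
        calc Real.exp (-R) * h x = h x * Real.exp (-R) := by ring
          _ ≤ h x * Real.exp (w x) :=
            mul_le_mul_of_nonneg_left (Real.exp_le_exp.2 (neg_le_of_abs_le hx)) (hh0 x)
      rwa [integral_const_mul] at hle
    · have hle : ∫ x, h x * Real.exp (w x) ∂μ ≤ ∫ _x, Mh * E ∂μ := by
        apply integral_mono_ae hint (integrable_const _)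
        filter_upwards [hw] with x hx
        exact mul_le_mul (hhM x) (Real.exp_le_exp.2 (le_of_abs_le hx))
          (Real.exp_pos _).le hMh.le
      simpa using hle
  obtain ⟨hintu, hIul, hIuu⟩ := fact u hum hu
  obtain ⟨hintv, hIvl, hIvu⟩ := fact v hvm hv
  set Iu := ∫ y, h y * Real.exp (u y) ∂μ with hIudef
  set Iv := ∫ y, h y * Real.exp (v y) ∂μ with hIvdef
  have hIu0 : 0 < Iu := lt_of_lt_of_le hm_pos hIul
  have hIv0 : 0 < Iv := lt_of_lt_of_le hm_pos hIvl
  have huv_bdd : ∀ᵐ x ∂μ, |u x - v x| ≤ 2 * R := by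
    filter_upwards [hu, hv] with x hxu hxv
    calc |u x - v x| ≤ |u x| + |v x| := abs_sub _ _
      _ ≤ 2 * R := by linarith
  have huvint : Integrable (fun x => |u x - v x|) μ :=
    integrable_of_bdd ((hum.sub hvm).abs).aestronglyMeasurable
      (by filter_upwards [huv_bdd] with x hx; simpa [abs_abs] using hx)
  set J := ∫ x, |u x - v x| ∂μ with hJdef
  have hJ0 : 0 ≤ J := integral_nonneg fun x => abs_nonneg _
  have hJle : J ≤ 2 * R := by
    have := integral_mono_ae huvint (integrable_const (2 * R)) huv_bdd
    simpa using this
  have hId : |Iu - Iv| ≤ Mh * E * J := by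
    have h1 : Iu - Iv = ∫ x, (h x * Real.exp (u x) - h x * Real.exp (v x)) ∂μ :=
      (integral_sub hintu hintv).symm
    rw [h1]
    calc |∫ x, (h x * Real.exp (u x) - h x * Real.exp (v x)) ∂μ|
        ≤ ∫ x, |h x * Real.exp (u x) - h x * Real.exp (v x)| ∂μ := by
          simpa [Real.norm_eq_abs] using
            norm_integral_le_integral_norm (μ := μ)
              (fun x => h x * Real.exp (u x) - h x * Real.exp (v x))
      _ ≤ ∫ x, Mh * E * |u x - v x| ∂μ := by
          have hsubint : Integrable
              (fun x => |h x * Real.exp (u x) - h x * Real.exp (v x)|) μ :=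
            (hintu.sub hintv).abs
          apply integral_mono_ae hsubint (huvint.const_mul _)
          filter_upwards [hu, hv] with x hxu hxv
          have hid : h x * Real.exp (u x) - h x * Real.exp (v x)
              = h x * (Real.exp (u x) - Real.exp (v x)) := by ring
          rw [hid, abs_mul, abs_of_nonneg (hh0 x)]
          calc h x * |Real.exp (u x) - Real.exp (v x)|
              ≤ Mh * (E * |u x - v x|) :=
                mul_le_mul (hhM x) (exp_lip hxu hxv) (abs_nonneg _) hMh.le
            _ = Mh * E * |u x - v x| := by ring
      _ = Mh * E * J := by rw [integral_const_mul]
  have hptwise : ∀ᵐ x ∂μ,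
      |h x * Real.exp (u x) / Iu - h x * Real.exp (v x) / Iv|
        ≤ K1 * |u x - v x| + K2 * J := by
    filter_upwards [hu, hv] with x hxu hxv
    rw [div_sub_div _ _ (ne_of_gt hIu0) (ne_of_gt hIv0), abs_div,
      abs_of_pos (mul_pos hIu0 hIv0), div_le_iff₀ (mul_pos hIu0 hIv0)]
    have habs1 : |h x * (Real.exp (u x) - Real.exp (v x))| ≤ Mh * (E * |u x - v x|) := by
      rw [abs_mul, abs_of_nonneg (hh0 x)]
      exact mul_le_mul (hhM x) (exp_lip hxu hxv) (abs_nonneg _) hMh.le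
    have habs2 : |h x * Real.exp (v x)| ≤ Mh * E := by
      rw [abs_of_nonneg (mul_nonneg (hh0 x) (Real.exp_pos _).le)]
      exact mul_le_mul (hhM x) (Real.exp_le_exp.2 (le_of_abs_le hxv))
        (Real.exp_pos _).le hMh.le
    have habs3 : |Iv - Iu| ≤ Mh * E * J := by rw [abs_sub_comm]; exact hId
    have hnum : |h x * Real.exp (u x) * Iv - Iu * (h x * Real.exp (v x))|
        ≤ Mh * E * |u x - v x| * Iv + Mh * E * (Mh * E * J) := by
      have hid : h x * Real.exp (u x) * Iv - Iu * (h x * Real.exp (v x))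
          = (h x * (Real.exp (u x) - Real.exp (v x))) * Iv
            + (h x * Real.exp (v x)) * (Iv - Iu) := by ring
      rw [hid]
      calc |(h x * (Real.exp (u x) - Real.exp (v x))) * Iv
            + (h x * Real.exp (v x)) * (Iv - Iu)|
          ≤ |(h x * (Real.exp (u x) - Real.exp (v x))) * Iv|
            + |(h x * Real.exp (v x)) * (Iv - Iu)| := abs_add_le _ _
        _ = |h x * (Real.exp (u x) - Real.exp (v x))| * Iv
            + |h x * Real.exp (v x)| * |Iv - Iu| := by
            rw [abs_mul (h x * (Real.exp (u x) - Real.exp (v x))) Iv,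
              abs_mul (h x * Real.exp (v x)) (Iv - Iu), abs_of_pos hIv0]
        _ ≤ (Mh * (E * |u x - v x|)) * Iv + (Mh * E) * (Mh * E * J) :=
            add_le_add (mul_le_mul_of_nonneg_right habs1 hIv0.le)
              (mul_le_mul habs2 habs3 (abs_nonneg _) (mul_pos hMh hE0).le)
        _ = Mh * E * |u x - v x| * Iv + Mh * E * (Mh * E * J) := by ring
    calc |h x * Real.exp (u x) * Iv - Iu * (h x * Real.exp (v x))|
        ≤ Mh * E * |u x - v x| * Iv + Mh * E * (Mh * E * J) := hnum
      _ = K1 * |u x - v x| * (m * Iv) + K2 * J * (m * m) := by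
          rw [hK1def, hK2def]
          field_simp
      _ ≤ K1 * |u x - v x| * (Iu * Iv) + K2 * J * (Iu * Iv) := by
          apply add_le_add
          · exact mul_le_mul_of_nonneg_left (mul_le_mul_of_nonneg_right hIul hIv0.le)
              (mul_nonneg hK1.le (abs_nonneg _))
          · exact mul_le_mul_of_nonneg_left
              (mul_le_mul hIul hIvl hm_pos.le hIu0.le) (mul_nonneg hK2.le hJ0)
      _ = (K1 * |u x - v x| + K2 * J) * (Iu * Iv) := by ring
  -- integral comparison
  set D := K1 * (2 * R) + K2 * (2 * R) with hDdef
  have hD0 : 0 ≤ D := by positivity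
  have hG_bdd : ∀ᵐ x ∂μ, K1 * |u x - v x| + K2 * J ≤ D := by
    filter_upwards [huv_bdd] with x hx
    rw [hDdef]
    apply add_le_add
    · exact mul_le_mul_of_nonneg_left hx hK1.le
    · exact mul_le_mul_of_nonneg_left hJle hK2.le
  have hdiff_meas : Measurable
      (fun x => |h x * Real.exp (u x) / Iu - h x * Real.exp (v x) / Iv|) := by
    fun_prop
  have hmeas1 : Measurable
      (fun x => |h x * Real.exp (u x) / Iu - h x * Real.exp (v x) / Iv| ^ p) := by
    fun_prop
  have int_lhs : Integrable
      (fun x => |h x * Real.exp (u x) / Iu - h x * Real.exp (v x) / Iv| ^ p) μ := by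
    apply integrable_of_bdd hmeas1.aestronglyMeasurable (C := D ^ p)
    filter_upwards [hptwise, hG_bdd] with x hx1 hx2
    rw [abs_of_nonneg (Real.rpow_nonneg (abs_nonneg _) p)]
    exact Real.rpow_le_rpow (abs_nonneg _) (le_trans hx1 hx2) hp0.le
  have hmeas2 : Measurable (fun x => (K1 * |u x - v x| + K2 * J) ^ p) := by
    fun_prop
  have int_G : Integrable (fun x => (K1 * |u x - v x| + K2 * J) ^ p) μ := by
    apply integrable_of_bdd hmeas2.aestronglyMeasurable (C := D ^ p)
    filter_upwards [hG_bdd] with x hx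
    have hnn : 0 ≤ K1 * |u x - v x| + K2 * J :=
      add_nonneg (mul_nonneg hK1.le (abs_nonneg _)) (mul_nonneg hK2.le hJ0)
    rw [abs_of_nonneg (Real.rpow_nonneg hnn p)]
    exact Real.rpow_le_rpow hnn hx hp0.le
  have hmeas3 : Measurable (fun x => (K1 * |u x - v x|) ^ p) := by
    fun_prop
  have intA : Integrable (fun x => (K1 * |u x - v x|) ^ p) μ := by
    apply integrable_of_bdd hmeas3.aestronglyMeasurable (C := (K1 * (2 * R)) ^ p)
    filter_upwards [huv_bdd] with x hx
    have hnn : 0 ≤ K1 * |u x - v x| := mul_nonneg hK1.le (abs_nonneg _)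
    rw [abs_of_nonneg (Real.rpow_nonneg hnn p)]
    exact Real.rpow_le_rpow hnn (mul_le_mul_of_nonneg_left hx hK1.le) hp0.le
  have int_rhs2 : Integrable
      (fun x => 2 ^ p * ((K1 * |u x - v x|) ^ p + (K2 * J) ^ p)) μ :=
    (intA.add (integrable_const _)).const_mul _
  have step1 : ∫ x, |h x * Real.exp (u x) / Iu - h x * Real.exp (v x) / Iv| ^ p ∂μ
      ≤ ∫ x, (K1 * |u x - v x| + K2 * J) ^ p ∂μ := by
    apply integral_mono_ae int_lhs int_G
    filter_upwards [hptwise] with x hx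
    exact Real.rpow_le_rpow (abs_nonneg _) hx hp0.le
  have step2 : ∫ x, (K1 * |u x - v x| + K2 * J) ^ p ∂μ
      ≤ ∫ x, 2 ^ p * ((K1 * |u x - v x|) ^ p + (K2 * J) ^ p) ∂μ := by
    apply integral_mono_ae int_G int_rhs2
    apply Filter.Eventually.of_forall
    intro x
    exact two_rpow_bound (mul_nonneg hK1.le (abs_nonneg _)) (mul_nonneg hK2.le hJ0) hp
  have step3 : ∫ x, 2 ^ p * ((K1 * |u x - v x|) ^ p + (K2 * J) ^ p) ∂μ
      = 2 ^ p * (K1 ^ p * ∫ x, |u x - v x| ^ p ∂μ + K2 ^ p * J ^ p) := by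
    rw [integral_const_mul]
    congr 1
    rw [integral_add intA (integrable_const _), integral_const]
    simp only [measure_univ, probReal_univ, ENNReal.toReal_one, smul_eq_mul, one_mul]
    congr 1
    · have heq : ∀ x, (K1 * |u x - v x|) ^ p = K1 ^ p * |u x - v x| ^ p :=
        fun x => Real.mul_rpow hK1.le (abs_nonneg _)
      simp only [heq]
      rw [integral_const_mul]
    · exact Real.mul_rpow hK2.le hJ0
  have hJp : J ^ p ≤ ∫ x, |u x - v x| ^ p ∂μ :=
    jensen_rpow hp (hum.sub hvm).aestronglyMeasurable huv_bdd
  have hA0 : 0 ≤ ∫ x, |u x - v x| ^ p ∂μ :=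
    integral_nonneg fun x => Real.rpow_nonneg (abs_nonneg _) p
  have final_int : ∫ x, |h x * Real.exp (u x) / Iu - h x * Real.exp (v x) / Iv| ^ p ∂μ
      ≤ C0 * ∫ x, |u x - v x| ^ p ∂μ := by
    calc ∫ x, |h x * Real.exp (u x) / Iu - h x * Real.exp (v x) / Iv| ^ p ∂μ
        ≤ 2 ^ p * (K1 ^ p * ∫ x, |u x - v x| ^ p ∂μ + K2 ^ p * J ^ p) :=
          step1.trans (step2.trans_eq step3)
      _ ≤ 2 ^ p * (K1 ^ p * ∫ x, |u x - v x| ^ p ∂μ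
            + K2 ^ p * ∫ x, |u x - v x| ^ p ∂μ) := by
          have hK2p : (0:ℝ) ≤ K2 ^ p := Real.rpow_nonneg hK2.le p
          nlinarith [mul_le_mul_of_nonneg_left hJp hK2p]
      _ = C0 * ∫ x, |u x - v x| ^ p ∂μ := by rw [hC0def]; ring
  calc (∫ x, |h x * Real.exp (u x) / Iu - h x * Real.exp (v x) / Iv| ^ p ∂μ) ^ (1 / p)
      ≤ (C0 * ∫ x, |u x - v x| ^ p ∂μ) ^ (1 / p) := by
        apply Real.rpow_le_rpow _ final_int (by positivity)
        exact integral_nonneg fun x => Real.rpow_nonneg (abs_nonneg _) p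
    _ = C0 ^ (1 / p) * (∫ x, |u x - v x| ^ p ∂μ) ^ (1 / p) :=
        Real.mul_rpow hC0.le hA0
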